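/- Let n ≥ 4 be an even integer and Λ = Cay(D_{2n}, Ψ) with Ψ = {b, ab, ..., a^{n-1}b} ∪ {a^{n/2}}. The strong metric dimension of Λ equals 2n − 2. -/

import Mathlib

/-- The Cayley graph of a group with connection set `S`. -/
def cayley {G : Type*} [Group G] (S : Set G) : SimpleGraph G :=
  SimpleGraph.fromRel (fun x y => x⁻¹ * y ∈ S)

/-- The connection set `Ψ = {b, ab, …, a^{n-1}b} ∪ {a^{n/2}}` in the dihedral group. -/
def Psi (n : ℕ) : Set (DihedralGroup n) :=
  {x | ∃ i : ZMod n, x = DihedralGroup.sr i} ∪ {DihedralGroup.r ((n / 2 : ℕ) : ZMod n)}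
/-- `w` strongly resolves `u` and `v`: one of them lies on a shortest path
between the other and `w`. -/
def StronglyResolves {V : Type*} (G : SimpleGraph V) (w u v : V) : Prop :=
  G.dist u w = G.dist u v + G.dist v w ∨ G.dist v w = G.dist v u + G.dist u w

/-- `S` is a strong resolving set of `G`. -/
def IsStrongResolvingSet {V : Type*} (G : SimpleGraph V) (S : Set V) : Prop :=
  ∀ u v : V, u ≠ v → ∃ w ∈ S, StronglyResolves G w u v

open DihedralGroup SimpleGraph

variable {n : ℕ}

abbrev half (n : ℕ) : ZMod n := ((n / 2 : ℕ) : ZMod n)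

lemma half_ne_zero (hn : 4 ≤ n) : half n ≠ 0 := by
  have h1 : 0 < n / 2 := by omega
  have h2 : n / 2 < n := by omega
  intro h
  rw [ZMod.natCast_eq_zero_iff] at h
  exact absurd (Nat.le_of_dvd h1 h) (by omega)

lemma half_add_half (hev : Even n) : half n + half n = 0 := by
  obtain ⟨k, hk⟩ := hev
  have : n / 2 = k := by omega
  rw [half, this, ← Nat.cast_add]
  have : k + k = n := by omega
  rw [this, ZMod.natCast_self]

lemma inv_r (i : ZMod n) : (r i)⁻¹ = r (-i) := rfl

lemma mem_Psi_sr (i : ZMod n) : sr i ∈ Psi n := Or.inl ⟨i, rfl⟩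
lemma mem_Psi_r (i : ZMod n) : r i ∈ Psi n ↔ i = half n := by simp [Psi]

lemma adj_r_sr (i j : ZMod n) : (cayley (Psi n)).Adj (r i) (sr j) := by
  rw [cayley, SimpleGraph.fromRel_adj]
  refine ⟨by simp, Or.inl ?_⟩
  rw [_root_.inv_r, r_mul_sr]
  exact mem_Psi_sr _

lemma adj_sr_r (i j : ZMod n) : (cayley (Psi n)).Adj (sr i) (r j) :=
  (adj_r_sr j i).symm

lemma adj_r_r (hev : Even n) (i j : ZMod n) :
    (cayley (Psi n)).Adj (r i) (r j) ↔ i ≠ j ∧ j = i + half n := by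
  have hmm := half_add_half hev
  rw [cayley, SimpleGraph.fromRel_adj]
  rw [_root_.inv_r, _root_.inv_r, r_mul_r, r_mul_r, mem_Psi_r, mem_Psi_r]
  constructor
  · rintro ⟨h, h2 | h2⟩
    · exact ⟨by simpa using h, by rw [← h2]; ring⟩
    · refine ⟨by simpa using h, ?_⟩
      have : j = i - half n := by rw [← h2]; ring
      rw [this, sub_eq_add_neg, neg_eq_of_add_eq_zero_left hmm]
  · rintro ⟨h, h2⟩
    exact ⟨by simpa using h, Or.inl (by rw [h2]; ring)⟩

lemma adj_sr_sr (hev : Even n) (i j : ZMod n) :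
    (cayley (Psi n)).Adj (sr i) (sr j) ↔ i ≠ j ∧ j = i + half n := by
  have hmm := half_add_half hev
  rw [cayley, SimpleGraph.fromRel_adj]
  have e1 : (sr i)⁻¹ * sr j = r (j - i) := rfl
  have e2 : (sr j)⁻¹ * sr i = r (i - j) := rfl
  rw [e1, e2, mem_Psi_r, mem_Psi_r]
  constructor
  · rintro ⟨h, h2 | h2⟩
    · exact ⟨by simpa using h, by rw [← h2]; ring⟩
    · refine ⟨by simpa using h, ?_⟩
      have : j = i - half n := by rw [← h2]; ring
      rw [this, sub_eq_add_neg, neg_eq_of_add_eq_zero_left hmm]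
  · rintro ⟨h, h2⟩
    exact ⟨by simpa using h, Or.inl (by rw [h2]; ring)⟩

/-- generic distance-two lemma -/
lemma dist_eq_two {V : Type*} {G : SimpleGraph V} {u v w : V} (hne : u ≠ v)
    (hadj : ¬ G.Adj u v) (h1 : G.Adj u w) (h2 : G.Adj w v) : G.dist u v = 2 := by
  have hle : G.dist u v ≤ 2 := by
    have := SimpleGraph.dist_le (Walk.cons h1 (Walk.cons h2 Walk.nil))
    simpa using this
  have h0 : G.dist u v ≠ 0 := by
    rw [Ne, SimpleGraph.dist_eq_zero_iff_eq_or_not_reachable]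
    push_neg
    exact ⟨hne, ⟨Walk.cons h1 (Walk.cons h2 Walk.nil)⟩⟩
  have h1' : G.dist u v ≠ 1 := fun h => hadj (SimpleGraph.dist_eq_one_iff_adj.mp h)
  omega

lemma dist_r_sr (i j : ZMod n) : (cayley (Psi n)).dist (r i) (sr j) = 1 :=
  SimpleGraph.dist_eq_one_iff_adj.mpr (adj_r_sr i j)

lemma dist_sr_r (i j : ZMod n) : (cayley (Psi n)).dist (sr i) (r j) = 1 :=
  SimpleGraph.dist_eq_one_iff_adj.mpr (adj_sr_r i j)

lemma dist_r_r_half (hev : Even n) (hn : 4 ≤ n) (i : ZMod n) :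
    (cayley (Psi n)).dist (r i) (r (i + half n)) = 1 := by
  refine SimpleGraph.dist_eq_one_iff_adj.mpr ((adj_r_r hev i _).mpr ⟨?_, rfl⟩)
  intro h
  exact half_ne_zero hn (by linear_combination h.symm)

lemma dist_sr_sr_half (hev : Even n) (hn : 4 ≤ n) (i : ZMod n) :
    (cayley (Psi n)).dist (sr i) (sr (i + half n)) = 1 := by
  refine SimpleGraph.dist_eq_one_iff_adj.mpr ((adj_sr_sr hev i _).mpr ⟨?_, rfl⟩)
  intro h
  exact half_ne_zero hn (by linear_combination h.symm)

lemma dist_r_r_two (hev : Even n) {i j : ZMod n} (hij : i ≠ j) (hh : j ≠ i + half n) :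
    (cayley (Psi n)).dist (r i) (r j) = 2 := by
  refine dist_eq_two (by simpa using hij) ?_ (adj_r_sr i 0) (adj_sr_r 0 j)
  rw [adj_r_r hev]
  rintro ⟨-, h⟩
  exact hh h

lemma dist_sr_sr_two (hev : Even n) {i j : ZMod n} (hij : i ≠ j) (hh : j ≠ i + half n) :
    (cayley (Psi n)).dist (sr i) (sr j) = 2 := by
  refine dist_eq_two (by simpa using hij) ?_ (adj_sr_r i 0) (adj_r_sr 0 j)
  rw [adj_sr_sr hev]
  rintro ⟨-, h⟩
  exact hh h

lemma dist_r_r_pos {i j : ZMod n} (hij : i ≠ j) :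
    1 ≤ (cayley (Psi n)).dist (r i) (r j) := by
  refine SimpleGraph.Reachable.pos_dist_of_ne ⟨Walk.cons (adj_r_sr i 0) (Walk.cons (adj_sr_r 0 j) Walk.nil)⟩ (by simpa using hij)

lemma dist_sr_sr_pos {i j : ZMod n} (hij : i ≠ j) :
    1 ≤ (cayley (Psi n)).dist (sr i) (sr j) := by
  refine SimpleGraph.Reachable.pos_dist_of_ne ⟨Walk.cons (adj_sr_r i 0) (Walk.cons (adj_r_sr 0 j) Walk.nil)⟩ (by simpa using hij)

lemma dist_r_r_le_two (hev : Even n) (i j : ZMod n) :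
    (cayley (Psi n)).dist (r i) (r j) ≤ 2 := by
  by_cases h : i = j
  · subst h; rw [SimpleGraph.dist_self]; omega
  · by_cases h2 : j = i + half n
    · subst h2
      rw [SimpleGraph.dist_eq_one_iff_adj.mpr ((adj_r_r hev _ _).mpr ⟨h, rfl⟩)]; omega
    · rw [dist_r_r_two hev h h2]

lemma dist_sr_sr_le_two (hev : Even n) (i j : ZMod n) :
    (cayley (Psi n)).dist (sr i) (sr j) ≤ 2 := by
  by_cases h : i = j
  · subst h; rw [SimpleGraph.dist_self]; omega
  · by_cases h2 : j = i + half n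
    · subst h2
      rw [SimpleGraph.dist_eq_one_iff_adj.mpr ((adj_sr_sr hev _ _).mpr ⟨h, rfl⟩)]; omega
    · rw [dist_sr_sr_two hev h h2]

lemma key_r (hev : Even n) {i j : ZMod n} (hij : i ≠ j) {w : DihedralGroup n}
    (hw : StronglyResolves (cayley (Psi n)) w (r i) (r j)) : w = r i ∨ w = r j := by
  by_contra hc
  push_neg at hc
  obtain ⟨h1, h2⟩ := hc
  have hmm := half_add_half hev
  have duv := dist_r_r_pos hij
  have dvu := dist_r_r_pos hij.symm
  have hc := SimpleGraph.dist_comm (G := cayley (Psi n)) (u := r i) (v := r j)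
  cases w with
  | sr k =>
    have e1 : (cayley (Psi n)).dist (r i) (sr k) = 1 := dist_r_sr i k
    have e2 : (cayley (Psi n)).dist (r j) (sr k) = 1 := dist_r_sr j k
    rcases hw with h | h <;> omega
  | r k =>
    have hki : k ≠ i := fun h => h1 (by rw [h])
    have hkj : k ≠ j := fun h => h2 (by rw [h])
    have dik := dist_r_r_pos (Ne.symm hki)
    have djk := dist_r_r_pos (Ne.symm hkj)
    have lik := dist_r_r_le_two hev i k
    have ljk := dist_r_r_le_two hev j k
    rcases hw with h | h
    · have e1 : (cayley (Psi n)).dist (r i) (r j) = 1 := by omega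
      have e2 : (cayley (Psi n)).dist (r j) (r k) = 1 := by omega
      have a1 := (adj_r_r hev i j).mp (SimpleGraph.dist_eq_one_iff_adj.mp e1)
      have a2 := (adj_r_r hev j k).mp (SimpleGraph.dist_eq_one_iff_adj.mp e2)
      apply hki
      rw [a2.2, a1.2, add_assoc, hmm, add_zero]
    · have e1 : (cayley (Psi n)).dist (r j) (r i) = 1 := by omega
      have e2 : (cayley (Psi n)).dist (r i) (r k) = 1 := by omega
      have a1 := (adj_r_r hev j i).mp (SimpleGraph.dist_eq_one_iff_adj.mp e1)
      have a2 := (adj_r_r hev i k).mp (SimpleGraph.dist_eq_one_iff_adj.mp e2)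
      apply hkj
      rw [a2.2, a1.2, add_assoc, hmm, add_zero]

lemma key_sr (hev : Even n) {i j : ZMod n} (hij : i ≠ j) {w : DihedralGroup n}
    (hw : StronglyResolves (cayley (Psi n)) w (sr i) (sr j)) : w = sr i ∨ w = sr j := by
  by_contra hc
  push_neg at hc
  obtain ⟨h1, h2⟩ := hc
  have hmm := half_add_half hev
  have duv := dist_sr_sr_pos hij
  have dvu := dist_sr_sr_pos hij.symm
  have hc := SimpleGraph.dist_comm (G := cayley (Psi n)) (u := sr i) (v := sr j)
  cases w with
  | r k =>
    have e1 : (cayley (Psi n)).dist (sr i) (r k) = 1 := dist_sr_r i k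
    have e2 : (cayley (Psi n)).dist (sr j) (r k) = 1 := dist_sr_r j k
    rcases hw with h | h <;> omega
  | sr k =>
    have hki : k ≠ i := fun h => h1 (by rw [h])
    have hkj : k ≠ j := fun h => h2 (by rw [h])
    have dik := dist_sr_sr_pos (Ne.symm hki)
    have djk := dist_sr_sr_pos (Ne.symm hkj)
    have lik := dist_sr_sr_le_two hev i k
    have ljk := dist_sr_sr_le_two hev j k
    rcases hw with h | h
    · have e1 : (cayley (Psi n)).dist (sr i) (sr j) = 1 := by omega
      have e2 : (cayley (Psi n)).dist (sr j) (sr k) = 1 := by omega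
      have a1 := (adj_sr_sr hev i j).mp (SimpleGraph.dist_eq_one_iff_adj.mp e1)
      have a2 := (adj_sr_sr hev j k).mp (SimpleGraph.dist_eq_one_iff_adj.mp e2)
      apply hki
      rw [a2.2, a1.2, add_assoc, hmm, add_zero]
    · have e1 : (cayley (Psi n)).dist (sr j) (sr i) = 1 := by omega
      have e2 : (cayley (Psi n)).dist (sr i) (sr k) = 1 := by omega
      have a1 := (adj_sr_sr hev j i).mp (SimpleGraph.dist_eq_one_iff_adj.mp e1)
      have a2 := (adj_sr_sr hev i k).mp (SimpleGraph.dist_eq_one_iff_adj.mp e2)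
      apply hkj
      rw [a2.2, a1.2, add_assoc, hmm, add_zero]

lemma self_resolves_left {V : Type*} (G : SimpleGraph V) (u v : V) :
    StronglyResolves G u u v :=
  Or.inr (by rw [SimpleGraph.dist_self, add_zero])

lemma self_resolves_right {V : Type*} (G : SimpleGraph V) (u v : V) :
    StronglyResolves G v u v :=
  Or.inl (by rw [SimpleGraph.dist_self, add_zero])

lemma one_ne_half (hn : 4 ≤ n) : (1 : ZMod n) ≠ half n := by
  haveI : NeZero n := ⟨by omega⟩
  haveI : Fact (1 < n) := ⟨by omega⟩
  intro h
  have h1 : (1 : ZMod n).val = 1 := ZMod.val_one n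
  have h2 : (half n).val = n / 2 := by
    rw [half, ZMod.val_natCast, Nat.mod_eq_of_lt (by omega)]
  have := congrArg ZMod.val h
  omega

theorem cayley_strong_metric_dimension (n : ℕ) (hn : 4 ≤ n) (hev : Even n) :
    IsLeast {m : ℕ | ∃ S : Set (DihedralGroup n),
      S.ncard = m ∧ IsStrongResolvingSet (cayley (Psi n)) S} (2 * n - 2) := by
  haveI : NeZero n := ⟨by omega⟩
  haveI : Fact (1 < n) := ⟨by omega⟩
  have hcard : Nat.card (DihedralGroup n) = 2 * n := DihedralGroup.nat_card
  constructor
  · -- upper bound: the complement of {r 0, sr 0} is a strong resolving set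
    refine ⟨({r 0, sr 0} : Set (DihedralGroup n))ᶜ, ?_, ?_⟩
    · have h2 : ({r 0, sr 0} : Set (DihedralGroup n)).ncard = 2 := Set.ncard_pair (by intro h; cases h)
      have h3 := Set.ncard_add_ncard_compl ({r 0, sr 0} : Set (DihedralGroup n))
      omega
    · intro u v huv
      by_cases hu : u ∈ ({r 0, sr 0} : Set (DihedralGroup n))ᶜ
      · exact ⟨u, hu, self_resolves_left _ _ _⟩
      by_cases hv : v ∈ ({r 0, sr 0} : Set (DihedralGroup n))ᶜ
      · exact ⟨v, hv, self_resolves_right _ _ _⟩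
      simp only [Set.mem_compl_iff, not_not, Set.mem_insert_iff,
        Set.mem_singleton_iff] at hu hv
      have h10 : (1 : ZMod n) ≠ 0 := one_ne_zero
      have hr1 : (r 1 : DihedralGroup n) ∈ ({r 0, sr 0} : Set (DihedralGroup n))ᶜ := by
        simp only [Set.mem_compl_iff, Set.mem_insert_iff, Set.mem_singleton_iff]
        push_neg
        exact ⟨by intro h; exact h10 (DihedralGroup.r.inj h), by simp⟩
      have hd2 : (cayley (Psi n)).dist (r 0) (r 1) = 2 := by
        refine dist_r_r_two hev (Ne.symm h10) ?_
        rw [zero_add]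
        exact one_ne_half hn
      have heq : (cayley (Psi n)).dist (r 0) (r 1) =
          (cayley (Psi n)).dist (r 0) (sr 0) + (cayley (Psi n)).dist (sr 0) (r 1) := by
        rw [hd2, dist_r_sr, dist_sr_r]
      rcases hu with hu | hu <;> rcases hv with hv | hv
      · exact absurd (hu.trans hv.symm) huv
      · subst hu; subst hv; exact ⟨r 1, hr1, Or.inl heq⟩
      · subst hu; subst hv; exact ⟨r 1, hr1, Or.inr heq⟩
      · exact absurd (hu.trans hv.symm) huv
  · -- lower bound
    rintro m ⟨S, rfl, hS⟩
    have hR : ∀ i j : ZMod n, i ≠ j → r i ∈ S ∨ r j ∈ S := by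
      intro i j hij
      obtain ⟨w, hwS, hw⟩ := hS (r i) (r j) (by simpa using hij)
      rcases key_r hev hij hw with h | h
      · left; rwa [h] at hwS
      · right; rwa [h] at hwS
    have hSr : ∀ i j : ZMod n, i ≠ j → sr i ∈ S ∨ sr j ∈ S := by
      intro i j hij
      obtain ⟨w, hwS, hw⟩ := hS (sr i) (sr j) (by simp [hij])
      rcases key_sr hev hij hw with h | h
      · left; rwa [h] at hwS
      · right; rwa [h] at hwS
    have hc1 : (Sᶜ ∩ Set.range (r : ZMod n → DihedralGroup n)).ncard ≤ 1 := by
      rw [Set.ncard_le_one (Set.toFinite _)]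
      rintro a ⟨ha, i, rfl⟩ b ⟨hb, j, rfl⟩
      by_contra hne
      have hij : i ≠ j := fun h => hne (by rw [h])
      rcases hR i j hij with h | h
      · exact ha h
      · exact hb h
    have hc2 : (Sᶜ ∩ Set.range (sr : ZMod n → DihedralGroup n)).ncard ≤ 1 := by
      rw [Set.ncard_le_one (Set.toFinite _)]
      rintro a ⟨ha, i, rfl⟩ b ⟨hb, j, rfl⟩
      by_contra hne
      have hij : i ≠ j := fun h => hne (by rw [h])
      rcases hSr i j hij with h | h
      · exact ha h
      · exact hb h
    have hsub : Sᶜ ⊆ (Sᶜ ∩ Set.range (r : ZMod n → DihedralGroup n)) ∪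
        (Sᶜ ∩ Set.range (sr : ZMod n → DihedralGroup n)) := by
      rintro (x | x) hx
      · exact Or.inl ⟨hx, x, rfl⟩
      · exact Or.inr ⟨hx, x, rfl⟩
    have hle : Sᶜ.ncard ≤ 2 := by
      have := Set.ncard_le_ncard hsub (Set.toFinite _)
      have := Set.ncard_union_le (Sᶜ ∩ Set.range (r : ZMod n → DihedralGroup n))
        (Sᶜ ∩ Set.range (sr : ZMod n → DihedralGroup n))
      omega
    have htot := Set.ncard_add_ncard_compl S
    omega
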